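/- Let C = {S_1,…,S_k} with k ≥ 2 be a partition of the vertices of graph G minimizing the standard LambdaCC objective with parameter λ ∈ (0,1). Then every cluster S_i satisfies scaled sparsest cut cut(S_i, V∖S_i)/(|S_i||V∖S_i|) ≤ λ. -/

import Mathlib

open Finset

/-- The number of edges of `G` between `S` and its complement. -/
def cutval {V : Type*} [Fintype V] [DecidableEq V]
    (G : SimpleGraph V) [DecidableRel G.Adj] (S : Finset V) : ℕ :=
  ((S ×ˢ Sᶜ).filter fun p => G.Adj p.1 p.2).card

/-- The standard LambdaCC objective of the clustering given by `c` (two nodes are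
co-clustered iff they have the same `c`-value): each cut edge costs `1 - λ` and each
co-clustered non-adjacent pair costs `λ`.  Each unordered pair is counted once
via `1/2 · offDiag`. -/
noncomputable def lamCC {V : Type*} [Fintype V] [DecidableEq V]
    (G : SimpleGraph V) [DecidableRel G.Adj] (lam : ℝ) (c : V → ℕ) : ℝ :=
  (1 / 2) * ∑ p ∈ Finset.univ.offDiag,
    (if G.Adj p.1 p.2 then (if c p.1 = c p.2 then 0 else 1 - lam)
     else (if c p.1 = c p.2 then lam else 0))

lemma merge_bound {V : Type*} [Fintype V] [DecidableEq V]
    (G : SimpleGraph V) [DecidableRel G.Adj] (lam : ℝ) (c : V → ℕ)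
    (hopt : ∀ c' : V → ℕ, lamCC G lam c ≤ lamCC G lam c')
    (k j : ℕ) (hjk : j ≠ k) :
    ((((Finset.univ.filter fun v => c v = k) ×ˢ (Finset.univ.filter fun v => c v = j)).filter
        fun p => G.Adj p.1 p.2).card : ℝ) ≤
      lam * ((Finset.univ.filter fun v => c v = k).card *
        (Finset.univ.filter fun v => c v = j).card) := by
  classical
  set Sk := Finset.univ.filter fun v => c v = k with hSk
  set Sj := Finset.univ.filter fun v => c v = j with hSj
  set c' : V → ℕ := fun v => if c v = k then j else c v with hc'
  have h := hopt c'
  set f : V × V → ℝ := fun p =>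
    (if G.Adj p.1 p.2 then (if c p.1 = c p.2 then 0 else 1 - lam)
     else (if c p.1 = c p.2 then lam else 0)) with hf
  set f' : V × V → ℝ := fun p =>
    (if G.Adj p.1 p.2 then (if c' p.1 = c' p.2 then 0 else 1 - lam)
     else (if c' p.1 = c' p.2 then lam else 0)) with hf'
  have hpt : ∀ p : V × V, f' p - f p =
      (if ((c p.1 = k ∧ c p.2 = j) ∨ (c p.1 = j ∧ c p.2 = k)) then
        (if G.Adj p.1 p.2 then -(1 - lam) else lam) else 0) := by
    intro p
    simp only [hf, hf', hc']
    split_ifs <;> first | ring1 | (exfalso; omega)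
  -- the set of changed pairs
  set T := (Sk ×ˢ Sj) ∪ (Sj ×ˢ Sk) with hT
  have hfilter : Finset.univ.offDiag.filter
      (fun p : V × V => (c p.1 = k ∧ c p.2 = j) ∨ (c p.1 = j ∧ c p.2 = k)) = T := by
    ext ⟨a, b⟩
    simp only [hT, hSk, hSj, mem_filter, mem_offDiag, mem_union, mem_product, mem_univ,
      true_and]
    constructor
    · rintro ⟨-, h⟩; tauto
    · intro h
      refine ⟨?_, by tauto⟩
      rcases h with ⟨ha, hb⟩ | ⟨ha, hb⟩ <;> (rintro rfl; omega)
  have hdiff : lamCC G lam c' - lamCC G lam c =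
      (1/2) * ∑ p ∈ T, (if G.Adj p.1 p.2 then -(1 - lam) else lam) := by
    unfold lamCC
    rw [← mul_sub, ← Finset.sum_sub_distrib]
    congr 1
    rw [← hfilter, Finset.sum_filter]
    exact Finset.sum_congr rfl fun p _ => hpt p
  have hdisj : Disjoint (Sk ×ˢ Sj) (Sj ×ˢ Sk) := by
    rw [Finset.disjoint_left]
    rintro ⟨a, b⟩ hab hab'
    simp only [hSk, hSj, mem_product, mem_filter, mem_univ, true_and] at hab hab'
    omega
  have hswap : (((Sj ×ˢ Sk).filter fun p => G.Adj p.1 p.2).card : ℝ) =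
      (((Sk ×ˢ Sj).filter fun p => G.Adj p.1 p.2).card : ℝ) := by
    norm_cast
    apply Finset.card_bij' (fun p _ => Prod.swap p) (fun p _ => Prod.swap p) <;>
      rintro ⟨a, b⟩ hab <;>
      simp only [mem_filter, mem_product, Prod.swap] at hab ⊢ <;>
      tauto
  have key : ∀ (A B : Finset V),
      ∑ p ∈ A ×ˢ B, (if G.Adj p.1 p.2 then -(1 - lam) else lam) =
        lam * (A.card * B.card) - ((A ×ˢ B).filter fun p => G.Adj p.1 p.2).card := by
    intro A B
    rw [Finset.sum_ite]
    simp only [Finset.sum_const, nsmul_eq_mul]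
    have hcc := Finset.card_filter_add_card_filter_not
      (s := A ×ˢ B) (p := fun p : V × V => G.Adj p.1 p.2)
    have hcc' : (((A ×ˢ B).filter fun p => G.Adj p.1 p.2).card : ℝ) +
        (((A ×ˢ B).filter fun p => ¬ G.Adj p.1 p.2).card : ℝ) = (A.card : ℝ) * B.card := by
      rw [← Nat.cast_mul, ← Finset.card_product]
      exact_mod_cast congrArg (Nat.cast (R := ℝ)) hcc
    push_cast at hcc' ⊢
    linear_combination lam * hcc' 
  have hsum : ∑ p ∈ T, (if G.Adj p.1 p.2 then -(1 - lam) else lam) =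
      2 * (lam * (Sk.card * Sj.card) -
        ((Sk ×ˢ Sj).filter fun p => G.Adj p.1 p.2).card) := by
    rw [hT, Finset.sum_union hdisj, key, key, hswap]
    push_cast
    ring
  rw [hsum] at hdiff
  have h0 : (0 : ℝ) ≤ lamCC G lam c' - lamCC G lam c := by linarith
  rw [hdiff] at h0
  push_cast at h0 ⊢
  linarith

/-- If `c` minimizes the standard LambdaCC objective and produces at least two
clusters, then every cluster `S_i` has scaled sparsest cut
`cut(S_i)/(|S_i||V∖S_i|) ≤ λ`. -/
theorem optimal_lamCC_cluster_sparsestCut_le {V : Type*} [Fintype V] [DecidableEq V]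
    (G : SimpleGraph V) [DecidableRel G.Adj] (lam : ℝ) (hlam0 : 0 < lam) (hlam1 : lam < 1)
    (c : V → ℕ) (hopt : ∀ c' : V → ℕ, lamCC G lam c ≤ lamCC G lam c')
    (hk : 2 ≤ (Finset.univ.image c).card) :
    ∀ k ∈ Finset.univ.image c,
      (cutval G (Finset.univ.filter fun v => c v = k) : ℝ)
          / (((Finset.univ.filter fun v => c v = k).card : ℝ)
              * ((Finset.univ.filter fun v => c v = k)ᶜ.card : ℝ)) ≤ lam := by
  classical
  intro k hkmem
  set S := Finset.univ.filter fun v => c v = k with hS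
  obtain ⟨v, -, hv⟩ := Finset.mem_image.mp hkmem
  have hScard : 0 < S.card := Finset.card_pos.mpr ⟨v, by simp [hS, hv]⟩
  set J := (Finset.univ.image c).erase k with hJ
  have hSc : Sᶜ = J.biUnion (fun j => Finset.univ.filter fun w => c w = j) := by
    ext u
    simp only [hS, hJ, Finset.mem_compl, Finset.mem_filter, Finset.mem_univ, true_and,
      Finset.mem_biUnion, Finset.mem_erase, Finset.mem_image]
    constructor
    · intro h; exact ⟨c u, ⟨h, u, rfl⟩, rfl⟩
    · rintro ⟨j, ⟨hne, -⟩, rfl⟩; exact hne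
  have hdisjJ : ∀ j1 ∈ J, ∀ j2 ∈ J, j1 ≠ j2 →
      Disjoint (Finset.univ.filter fun w => c w = j1)
        (Finset.univ.filter fun w => c w = j2) := by
    intro j1 _ j2 _ hne
    rw [Finset.disjoint_left]
    intro a ha ha'
    simp only [Finset.mem_filter] at ha ha'
    omega
  have hcutsum : (cutval G S : ℝ) =
      ∑ j ∈ J, (((S ×ˢ (Finset.univ.filter fun w => c w = j)).filter
        fun p => G.Adj p.1 p.2).card : ℝ) := by
    rw [cutval, hSc]
    norm_cast
    have hprod : S ×ˢ (J.biUnion fun j => Finset.univ.filter fun w => c w = j) =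
        J.biUnion fun j => S ×ˢ (Finset.univ.filter fun w => c w = j) := by
      ext ⟨a, b⟩
      simp only [Finset.mem_product, Finset.mem_biUnion]
      tauto
    rw [hprod, Finset.filter_biUnion]
    apply Finset.card_biUnion
    intro j1 _ j2 _ hne
    dsimp only [Function.onFun]
    rw [Finset.disjoint_left]
    rintro ⟨a, b⟩ hab hab'
    simp only [Finset.mem_filter, Finset.mem_product] at hab hab'
    have h1 := hab.1.2.2
    have h2 := hab'.1.2.2
    omega
  have hcompl : ((Sᶜ).card : ℝ) =
      ∑ j ∈ J, ((Finset.univ.filter fun w => c w = j).card : ℝ) := by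
    rw [hSc]; norm_cast; exact Finset.card_biUnion hdisjJ
  have hle : (cutval G S : ℝ) ≤ lam * (S.card * (Sᶜ).card) := by
    rw [hcutsum]
    calc ∑ j ∈ J, (((S ×ˢ (Finset.univ.filter fun w => c w = j)).filter
          fun p => G.Adj p.1 p.2).card : ℝ)
        ≤ ∑ j ∈ J, lam * (S.card * (Finset.univ.filter fun w => c w = j).card) := by
          apply Finset.sum_le_sum
          intro j hj
          exact merge_bound G lam c hopt k j (Finset.ne_of_mem_erase hj)
      _ = lam * (S.card * (Sᶜ).card) := by
          rw [hcompl, Finset.mul_sum, Finset.mul_sum]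
  have hSccard : 0 < (Sᶜ).card := by
    obtain ⟨j, hjmem, hjne⟩ := Finset.exists_mem_ne (lt_of_lt_of_le one_lt_two hk) k
    obtain ⟨w, -, hw⟩ := Finset.mem_image.mp hjmem
    exact Finset.card_pos.mpr ⟨w, by simp [hS, hw, hjne]⟩
  rw [div_le_iff₀ (by positivity)]
  calc (cutval G S : ℝ) ≤ lam * (S.card * (Sᶜ).card) := hle
    _ = lam * ((S.card : ℝ) * ((Sᶜ).card : ℝ)) := by norm_num
    _ = _ := by ring
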